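/- For every continuously differentiable function f : [0,1] → ℝ, the value of f at the boundary point 0 satisfies |f(0)|² ≤ 2·(∫₀¹ f(x)² dx + ∫₀¹ f'(x)² dx). In particular, the evaluation map f ↦ f(0) is a linear map that is bounded with respect to the H¹ norm, with bound √2. -/

import Mathlib

open Real Set intervalIntegral

/-- Trace-type (Morrey) inequality: for a `C¹` function `f` on `[0,1]`,
`|f(0)|² ≤ 2(∫₀¹ f² + ∫₀¹ (f')²)`; in particular, evaluation at `0` is bounded
with respect to the `H¹` norm with bound `√2`. -/
theorem trace_inequality_eval_at_zero
    (f : ℝ → ℝ) (hf : ContDiff ℝ 1 f) :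
    |f 0| ^ 2 ≤ 2 * ((∫ x in (0 : ℝ)..1, f x ^ 2) + ∫ x in (0 : ℝ)..1, deriv f x ^ 2) ∧
    |f 0| ≤ Real.sqrt 2 *
      Real.sqrt ((∫ x in (0 : ℝ)..1, f x ^ 2) + ∫ x in (0 : ℝ)..1, deriv f x ^ 2) := by
  have hfc : Continuous f := hf.continuous
  have hfd : Differentiable ℝ f := hf.differentiable one_ne_zero
  have hf'c : Continuous (deriv f) := hf.continuous_deriv le_rfl
  set A := ∫ x in (0 : ℝ)..1, f x ^ 2 with hA
  set B := ∫ x in (0 : ℝ)..1, deriv f x ^ 2 with hB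
  have hAnn : 0 ≤ A :=
    intervalIntegral.integral_nonneg zero_le_one (fun x _ => sq_nonneg _)
  have hBnn : 0 ≤ B :=
    intervalIntegral.integral_nonneg zero_le_one (fun x _ => sq_nonneg _)
  have hcont2 : Continuous (fun x => 2 * f x * deriv f x) := by
    continuity
  have habs_le : ∀ x : ℝ, |2 * f x * deriv f x| ≤ f x ^ 2 + deriv f x ^ 2 := by
    intro x
    have := abs_nonneg (f x - deriv f x)
    have h1 : |2 * f x * deriv f x| = 2 * |f x| * |deriv f x| := by
      rw [abs_mul, abs_mul]; simp
    rw [h1]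
    nlinarith [sq_nonneg (|f x| - |deriv f x|), sq_abs (f x), sq_abs (deriv f x)]
  have hkey : ∀ y ∈ Icc (0:ℝ) 1, f 0 ^ 2 ≤ f y ^ 2 + (A + B) := by
    intro y hy
    have hftc : (∫ x in (0:ℝ)..y, 2 * f x * deriv f x) = f y ^ 2 - f 0 ^ 2 := by
      apply intervalIntegral.integral_eq_sub_of_hasDerivAt
      · intro x _
        have := ((hfd x).hasDerivAt).fun_pow 2
        simpa [mul_comm, mul_assoc, mul_left_comm] using this
      · exact hcont2.intervalIntegrable _ _
    have h1 : f 0 ^ 2 = f y ^ 2 - ∫ x in (0:ℝ)..y, 2 * f x * deriv f x := by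
      rw [hftc]; ring
    have h2 : |∫ x in (0:ℝ)..y, 2 * f x * deriv f x| ≤ A + B := by
      calc |∫ x in (0:ℝ)..y, 2 * f x * deriv f x|
          ≤ ∫ x in (0:ℝ)..y, |2 * f x * deriv f x| :=
            intervalIntegral.abs_integral_le_integral_abs hy.1
        _ ≤ ∫ x in (0:ℝ)..y, (f x ^ 2 + deriv f x ^ 2) := by
            apply intervalIntegral.integral_mono_on hy.1
            · exact (hcont2.abs).intervalIntegrable _ _
            · exact ((hfc.pow 2).add (hf'c.pow 2)).intervalIntegrable _ _
            · exact fun x _ => habs_le x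
        _ ≤ ∫ x in (0:ℝ)..1, (f x ^ 2 + deriv f x ^ 2) := by
            apply intervalIntegral.integral_mono_interval le_rfl hy.1 hy.2
            · filter_upwards with x
              positivity
            · exact ((hfc.pow 2).add (hf'c.pow 2)).intervalIntegrable _ _
        _ = A + B := by
            rw [hA, hB]
            exact intervalIntegral.integral_add ((hfc.pow 2).intervalIntegrable _ _)
              ((hf'c.pow 2).intervalIntegrable _ _)
    rw [h1]
    have := neg_abs_le (∫ x in (0:ℝ)..y, 2 * f x * deriv f x)
    linarith
  have hmain : f 0 ^ 2 ≤ 2 * (A + B) := by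
    have h3 : (∫ _y in (0:ℝ)..1, f 0 ^ 2) ≤ ∫ y in (0:ℝ)..1, (f y ^ 2 + (A + B)) := by
      apply intervalIntegral.integral_mono_on zero_le_one
      · exact intervalIntegrable_const
      · exact ((hfc.pow 2).add continuous_const).intervalIntegrable _ _
      · exact hkey
    have h4 : (∫ _y in (0:ℝ)..1, f 0 ^ 2) = f 0 ^ 2 := by simp
    have h5 : (∫ y in (0:ℝ)..1, (f y ^ 2 + (A + B))) = A + (A + B) := by
      rw [intervalIntegral.integral_add ((show Continuous (fun x => f x ^ 2) from hfc.pow 2).intervalIntegrable _ _)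
        intervalIntegrable_const]
      simp [hA]
    rw [h4, h5] at h3
    linarith
  have habs : |f 0| ^ 2 = f 0 ^ 2 := sq_abs _
  constructor
  · rw [habs]; exact hmain
  · have h6 : |f 0| = Real.sqrt (f 0 ^ 2) := (Real.sqrt_sq_eq_abs _).symm
    rw [h6]
    calc Real.sqrt (f 0 ^ 2) ≤ Real.sqrt (2 * (A + B)) := Real.sqrt_le_sqrt hmain
      _ = Real.sqrt 2 * Real.sqrt (A + B) := Real.sqrt_mul (by norm_num) _
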